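/- Let p be a prime and m ≥ 1, and set k = p^m - 1. For all integers N with 1 ≤ N ≤ k and all j ≥ N, we have (-1)^j * C(k + N - j, j) ≡ (-1)^{j - N} * C(k - j, j - N) modulo p. -/
import Mathlib

/-- Key lemma: for `k = p^m - 1`, `s ≤ k`, `t ≤ k`,
`C(k - s, t) ≡ (-1)^t C(s + t, t) (mod p)`. -/
lemma keyL (p m : ℕ) (hp : p.Prime) :
    ∀ s t : ℕ, s ≤ p ^ m - 1 → t ≤ p ^ m - 1 →
      ((Nat.choose (p ^ m - 1 - s) t : ZMod p)) =
        (-1) ^ t * (Nat.choose (s + t) t : ZMod p) := by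
  have hq : 1 ≤ p ^ m := Nat.one_le_pow _ _ hp.pos
  intro s
  induction s with
  | zero =>
    intro t
    induction t with
    | zero => simp
    | succ t iht =>
      intro _ ht
      have h1 : t ≤ p ^ m - 1 := by omega
      have pascal : (p ^ m).choose (t + 1)
          = (p ^ m - 1).choose t + (p ^ m - 1).choose (t + 1) := by
        have h : p ^ m - 1 + 1 = p ^ m := by omega
        conv_lhs => rw [← h]
        rw [Nat.choose_succ_succ]
      have hdvd : p ∣ (p ^ m).choose (t + 1) :=
        Nat.Prime.dvd_choose_pow hp (by omega) (by omega)
      have hzero : ((p ^ m).choose (t + 1) : ZMod p) = 0 :=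
        (ZMod.natCast_eq_zero_iff _ _).mpr hdvd
      have iht' := iht (by omega) h1
      simp only [Nat.sub_zero, Nat.zero_add, Nat.choose_self, Nat.cast_one, mul_one] at iht' ⊢
      have : ((p ^ m - 1).choose t : ZMod p) + ((p ^ m - 1).choose (t + 1) : ZMod p) = 0 := by
        rw [← Nat.cast_add, ← pascal, hzero]
      rw [iht'] at this
      have := eq_neg_of_add_eq_zero_right this
      rw [this]
      ring
  | succ s ihs =>
    intro t
    induction t with
    | zero => intro _ _; simp
    | succ t iht =>
      intro hs ht
      have pascal : (p ^ m - 1 - s).choose (t + 1)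
          = (p ^ m - 1 - (s + 1)).choose t + (p ^ m - 1 - (s + 1)).choose (t + 1) := by
        have h : p ^ m - 1 - s = (p ^ m - 1 - (s + 1)) + 1 := by omega
        rw [h, Nat.choose_succ_succ]
      have h1 := ihs (t + 1) (by omega) ht
      have h2 := iht (by omega) (by omega)
      have h3 : ((p ^ m - 1 - s).choose (t + 1) : ZMod p)
          = ((p ^ m - 1 - (s + 1)).choose t : ZMod p)
            + ((p ^ m - 1 - (s + 1)).choose (t + 1) : ZMod p) := by
        rw [pascal]; push_cast; ring
      have h4 : ((p ^ m - 1 - (s + 1)).choose (t + 1) : ZMod p)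
          = (-1) ^ (t + 1) * ((s + (t + 1)).choose (t + 1) : ZMod p)
            - (-1) ^ t * (((s + 1) + t).choose t : ZMod p) := by
        rw [← h1, ← h2, h3]; ring
      rw [h4]
      have hch : ((s + 1) + (t + 1)).choose (t + 1)
          = ((s + 1) + t).choose t + (s + (t + 1)).choose (t + 1) := by
        have h : (s + 1) + (t + 1) = (s + (t + 1)) + 1 := by omega
        have h' : (s + 1) + t = s + (t + 1) := by omega
        rw [h, h', Nat.choose_succ_succ']
      rw [hch]
      push_cast
      ring

/-- Let `p` be prime, `m ≥ 1` and `k = p^m - 1`. For `1 ≤ N ≤ k` and `j ≥ N`,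
`(-1)^j C(k + N - j, j) ≡ (-1)^{j-N} C(k - j, j - N) (mod p)`. -/
theorem stmt4 (p m : ℕ) (hp : p.Prime) (hm : 1 ≤ m) (N j : ℕ)
    (hN1 : 1 ≤ N) (hN2 : N ≤ p ^ m - 1) (hj : N ≤ j) :
    ((-1 : ℤ) ^ j * (Nat.choose (p ^ m - 1 + N - j) j : ℤ)) ≡
      ((-1 : ℤ) ^ (j - N) * (Nat.choose (p ^ m - 1 - j) (j - N) : ℤ)) [ZMOD p] := by
  have hq : 2 ≤ p ^ m := by
    calc 2 ≤ p := hp.two_le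
    _ = p ^ 1 := (pow_one p).symm
    _ ≤ p ^ m := Nat.pow_le_pow_right hp.pos hm
  rw [← ZMod.intCast_eq_intCast_iff]
  push_cast
  by_cases hjk : j ≤ p ^ m - 1
  · have e1 : p ^ m - 1 + N - j = p ^ m - 1 - (j - N) := by omega
    rw [e1, keyL p m hp (j - N) j (by omega) hjk,
      keyL p m hp j (j - N) hjk (by omega)]
    have hsym : (j - N + j).choose j = (j + (j - N)).choose (j - N) := by
      have h1 : j - N + j = j + (j - N) := by omega
      have h2 : j + (j - N) - j = j - N := by omega
      have h3 := (Nat.choose_symm (show j ≤ j + (j - N) by omega)).symm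
      rw [h2] at h3
      rw [h1, h3]
    rw [hsym]
    have he : ∀ a : ℕ, ((-1 : ZMod p)) ^ a * ((-1) ^ a) = 1 := fun a => by
      rw [← pow_add]; exact Even.neg_one_pow ⟨a, by ring⟩
    calc (-1 : ZMod p) ^ j * ((-1) ^ j * ((j + (j - N)).choose (j - N) : ZMod p))
        = ((-1 : ZMod p) ^ j * (-1) ^ j) * ((j + (j - N)).choose (j - N) : ZMod p) := by ring
      _ = ((j + (j - N)).choose (j - N) : ZMod p) := by rw [he]; ring
      _ = ((-1 : ZMod p) ^ (j - N) * (-1) ^ (j - N)) * ((j + (j - N)).choose (j - N) : ZMod p) := by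
          rw [he]; ring
      _ = (-1 : ZMod p) ^ (j - N) * ((-1) ^ (j - N) * ((j + (j - N)).choose (j - N) : ZMod p)) := by
          ring
  · have e1 : (p ^ m - 1 + N - j).choose j = 0 :=
      Nat.choose_eq_zero_of_lt (by omega)
    have e2 : (p ^ m - 1 - j).choose (j - N) = 0 :=
      Nat.choose_eq_zero_of_lt (by omega)
    rw [e1, e2]
    simp
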